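/- arXiv:2212.11097 — 2 statements merged into one kernel-verified Lean document; each statement's English description precedes it below -/
import Mathlib

section
/- Let Δ be a convex lattice polygon with boundary data β, and let γ be a λ-increasing lattice path from p to q contained in Δ. If γ′ is a lattice path with γ ≺_L γ′ or γ ≺_R γ′, then D(γ′) ⊆ D(γ) as multisets, i.e. every down step of γ′ is a down step of γ, counted with multiplicity. -/
open Classical

noncomputable section

namespace TropPaths

/-- Lattice points of the plane. -/
abbrev Pt := ℤ × ℤ

/-- The order on `ℤ²` induced by `λ(x,y) = x - εy` for a small irrational `ε > 0`:
`p ≺ q` iff `p₁ < q₁`, or (`p₁ = q₁` and `p₂ > q₂`). -/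
def lamLT (p q : Pt) : Prop := p.1 < q.1 ∨ (p.1 = q.1 ∧ q.2 < p.2)

/-- A lattice path, recorded as the list of its points, is `λ`-increasing. -/
def Increasing (γ : List Pt) : Prop := List.Chain' lamLT γ

/-- The determinant of two vectors in `ℤ²`. -/
def det (u v : Pt) : ℤ := u.1 * v.2 - u.2 * v.1

/-- The `k`-th point of a path (junk value out of range). -/
def pt (γ : List Pt) (k : ℕ) : Pt := γ.getD k (0, 0)

/-- The `k`-th step vector of a path. -/
def stepAt (γ : List Pt) (k : ℕ) : Pt := pt γ (k + 1) - pt γ k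

/-- The list of all step vectors of a path. -/
def steps (γ : List Pt) : List Pt := List.zipWith (fun a b => b - a) γ γ.tail

/-- The multiset of down steps `(0,-s)`, `s > 0`, of a path. -/
def downSteps (γ : List Pt) : Multiset Pt :=
  Multiset.filter (fun v => v.1 = 0 ∧ v.2 < 0) (steps γ : Multiset Pt)

/-- The multiset of up-right steps of a path. -/
def upRightSteps (γ : List Pt) : Multiset Pt :=
  Multiset.filter (fun v => 0 < v.1 ∧ 0 < v.2) (steps γ : Multiset Pt)

/-- The path makes a turn of sign `s` at the (interior) index `k`; for left turns
`s = (0 < ·)`, for right turns `s = (· < 0)`. -/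
def TurnAt (s : ℤ → Prop) (γ : List Pt) (k : ℕ) : Prop :=
  0 < k ∧ k + 1 < γ.length ∧ s (det (pt γ k - pt γ (k - 1)) (pt γ (k + 1) - pt γ k))

/-- `k` is the first turn of sign `s` of the path. -/
def FirstTurn (s : ℤ → Prop) (γ : List Pt) (k : ℕ) : Prop :=
  TurnAt s γ k ∧ ∀ j, TurnAt s γ j → k ≤ j

/-- Twice the area of the triangle with vertices `γ(k-1), γ(k), γ(k+1)`. -/
def triArea2 (γ : List Pt) (k : ℕ) : ℕ :=
  (det (pt γ k - pt γ (k - 1)) (pt γ (k + 1) - pt γ k)).natAbs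

/-- The path obtained by cutting the corner at index `k`, i.e. deleting the point `γ(k)`. -/
def cut (γ : List Pt) (k : ℕ) : List Pt := γ.eraseIdx k

/-- The path obtained by completing the parallelogram at index `k`, i.e. replacing
`γ(k)` by `γ(k-1) + γ(k+1) - γ(k)`. -/
def push (γ : List Pt) (k : ℕ) : List Pt :=
  γ.set k (pt γ (k - 1) + pt γ (k + 1) - pt γ k)

/-- All points of the path lie in `Δ`. -/
def Inside (Δ : Set Pt) (γ : List Pt) : Prop := ∀ z ∈ γ, z ∈ Δ

/-- Mikhalkin's multiplicity recursion, as a functional relation: `MultRel Δ Init s γ m`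
means that the recursion (performed always at the *first* turn of sign `s`) assigns the
multiplicity `m` to the path `γ`.  Here `Δ` is the set of lattice points of the polygon,
`Init` the set of initial paths (of multiplicity `1`), and `s` the turn sign
(`0 < ·` for left turns / `mult₊`, `· < 0` for right turns / `mult₋`). -/
inductive MultRel (Δ : Set Pt) (Init : List Pt → Prop) (s : ℤ → Prop) : List Pt → ℕ → Prop
  | init {γ : List Pt} : Init γ → MultRel Δ Init s γ 1
  | noTurn {γ : List Pt} : ¬Init γ → (∀ k, ¬TurnAt s γ k) → MultRel Δ Init s γ 0
  | stepIn {γ : List Pt} {k m' m'' : ℕ} : ¬Init γ → FirstTurn s γ k →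
      Inside Δ (push γ k) → MultRel Δ Init s (cut γ k) m' →
      MultRel Δ Init s (push γ k) m'' →
      MultRel Δ Init s γ (triArea2 γ k * m' + m'')
  | stepOut {γ : List Pt} {k m' : ℕ} : ¬Init γ → FirstTurn s γ k →
      ¬Inside Δ (push γ k) → MultRel Δ Init s (cut γ k) m' →
      MultRel Δ Init s γ (triArea2 γ k * m')

/-- The multiplicity function determined by Mikhalkin's recursion. -/
def multOf (Δ : Set Pt) (Init : List Pt → Prop) (s : ℤ → Prop) (γ : List Pt) : ℕ :=
  if h : ∃ m, MultRel Δ Init s γ m then h.choose else 0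

/-- `γ ≺ δ`: the path `δ` is obtained from `γ` by finitely many steps of the multiplicity
recursion (each step cuts the corner at the first turn of sign `s`, or completes the
parallelogram there). -/
inductive Reaches (Δ : Set Pt) (Init : List Pt → Prop) (s : ℤ → Prop) : List Pt → List Pt → Prop
  | refl (γ : List Pt) : Reaches Δ Init s γ γ
  | cutStep {γ δ : List Pt} {k : ℕ} : ¬Init γ → FirstTurn s γ k →
      Reaches Δ Init s (cut γ k) δ → Reaches Δ Init s γ δ
  | pushStep {γ δ : List Pt} {k : ℕ} : ¬Init γ → FirstTurn s γ k →
      Inside Δ (push γ k) → Reaches Δ Init s (push γ k) δ → Reaches Δ Init s γ δ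

/-- The lattice path starting at `p` with the given list of step vectors. -/
def pathFrom : Pt → List Pt → List Pt
  | p, [] => [p]
  | p, v :: vs => p :: pathFrom (p + v) vs

/-- Horizontal (rightward) steps of the given sizes. -/
def hSteps (l : List ℕ) : List Pt := l.map fun k => ((k : ℤ), 0)

/-- Vertical downward steps of the given sizes. -/
def dSteps (l : List ℕ) : List Pt := l.map fun k => ((0 : ℤ), -(k : ℤ))

/-- A multiset of positive integers is a partition of `t`. -/
def IsPartition (m : Multiset ℕ) (t : ℕ) : Prop := (∀ k ∈ m, 0 < k) ∧ m.sum = t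

/-! ## The rectangle `[0,c] × [0,d]` -/

/-- The lattice points of the rectangle with vertices `(0,0), (c,0), (0,d), (c,d)`. -/
def rect (c d : ℕ) : Set Pt := {z | 0 ≤ z.1 ∧ z.1 ≤ (c : ℤ) ∧ 0 ≤ z.2 ∧ z.2 ≤ (d : ℤ)}

/-- `β₊`-initial paths of the rectangle: from `p = (0,d)` clockwise along the top edge with
step sizes the parts of `μ₂` and then down the right edge with step sizes the parts of `ν₂`. -/
def InitPlusRect (d : ℕ) (μ₂ ν₂ : Multiset ℕ) (γ : List Pt) : Prop :=
  ∃ s t : List ℕ, (s : Multiset ℕ) = μ₂ ∧ (t : Multiset ℕ) = ν₂ ∧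
    γ = pathFrom (0, (d : ℤ)) (hSteps s ++ dSteps t)

/-- `β₋`-initial paths of the rectangle: from `p = (0,d)` counterclockwise down the left edge
with step sizes the parts of `ν₁` and then along the bottom edge with step sizes the parts
of `μ₁`. -/
def InitMinusRect (d : ℕ) (μ₁ ν₁ : Multiset ℕ) (γ : List Pt) : Prop :=
  ∃ s t : List ℕ, (s : Multiset ℕ) = ν₁ ∧ (t : Multiset ℕ) = μ₁ ∧
    γ = pathFrom (0, (d : ℤ)) (dSteps s ++ hSteps t)

/-- `mult₊` for the rectangle with boundary data `(μ₁, μ₂, ν₁, ν₂)`. -/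
def multPlusRect (c d : ℕ) (μ₂ ν₂ : Multiset ℕ) : List Pt → ℕ :=
  multOf (rect c d) (InitPlusRect d μ₂ ν₂) (fun x => 0 < x)

/-- `mult₋` for the rectangle with boundary data `(μ₁, μ₂, ν₁, ν₂)`. -/
def multMinusRect (c d : ℕ) (μ₁ ν₁ : Multiset ℕ) : List Pt → ℕ :=
  multOf (rect c d) (InitMinusRect d μ₁ ν₁) (fun x => x < 0)

/-- `mult = mult₊ · mult₋` for the rectangle with boundary data `(μ₁, μ₂, ν₁, ν₂)`. -/
def multRect (c d : ℕ) (μ₁ μ₂ ν₁ ν₂ : Multiset ℕ) (γ : List Pt) : ℕ :=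
  multPlusRect c d μ₂ ν₂ γ * multMinusRect c d μ₁ ν₁ γ

/-- A `λ`-increasing lattice path from `(0,d)` to `(c,0)` contained in the rectangle. -/
def IsPathRect (c d : ℕ) (γ : List Pt) : Prop :=
  Increasing γ ∧ γ.head? = some (0, (d : ℤ)) ∧ γ.getLast? = some ((c : ℤ), 0) ∧
    Inside (rect c d) γ

/-- The genericity condition: all subset sums of the `xᵢ` are distinct. -/
def Generic {n : ℕ} (x : Fin n → ℕ) : Prop :=
  ∀ I J : Finset (Fin n), I ≠ J → ∑ i ∈ I, x i ≠ ∑ j ∈ J, x j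

/-! ## General convex lattice polygons with boundary data -/

/-- The displacement vector of an edge: (lattice length of the edge) times the primitive
direction.  An edge is recorded as a pair (primitive direction, multiset of step lengths
`β_e`, listing each length `k` with multiplicity `β_e(k)`). -/
def edgeVec (e : Pt × Multiset ℕ) : Pt := ((e.2.sum : ℤ) * e.1.1, (e.2.sum : ℤ) * e.1.2)

/-- The endpoint of a chain of edges starting at `p`. -/
def chainEnd (p : Pt) (l : List (Pt × Multiset ℕ)) : Pt := p + (l.map edgeVec).sum

/-- The successive vertices of a chain of edges starting at `p`. -/
def chainPts : Pt → List (Pt × Multiset ℕ) → List Pt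
  | p, [] => [p]
  | p, e :: es => p :: chainPts (p + edgeVec e) es

/-- A convex lattice polygon together with boundary data `β`: it is encoded by its
`λ`-minimal vertex `p`, and its two boundary chains from `p` to the `λ`-maximal vertex `q`,
the clockwise one `cw` and the counterclockwise one `ccw`.  Each edge carries its primitive
direction and the multiset of step lengths `β_e` (which must sum to the lattice length of
the edge; here the lattice length is *defined* as that sum). -/
structure PolyData where
  /-- the `λ`-minimal vertex -/
  p : Pt
  /-- the clockwise boundary chain from `p` to `q` -/
  cw : List (Pt × Multiset ℕ)
  /-- the counterclockwise boundary chain from `p` to `q` -/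
  ccw : List (Pt × Multiset ℕ)
  cw_ne : cw ≠ []
  ccw_ne : ccw ≠ []
  /-- all edge directions are `λ`-positive -/
  cw_lam : ∀ e ∈ cw, lamLT (0, 0) e.1
  ccw_lam : ∀ e ∈ ccw, lamLT (0, 0) e.1
  /-- edge directions are primitive -/
  cw_prim : ∀ e ∈ cw, Int.gcd e.1.1 e.1.2 = 1
  ccw_prim : ∀ e ∈ ccw, Int.gcd e.1.1 e.1.2 = 1
  /-- the step lengths on each edge are positive, and each edge has positive lattice length -/
  cw_pos : ∀ e ∈ cw, e.2 ≠ 0 ∧ ∀ k ∈ e.2, 0 < k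
  ccw_pos : ∀ e ∈ ccw, e.2 ≠ 0 ∧ ∀ k ∈ e.2, 0 < k
  /-- strict convexity: consecutive clockwise edges turn right -/
  cw_conv : (cw.map Prod.fst).Chain' fun u v => det u v < 0
  /-- strict convexity: consecutive counterclockwise edges turn left -/
  ccw_conv : (ccw.map Prod.fst).Chain' fun u v => 0 < det u v
  /-- the two chains have common endpoint `q` -/
  closes : chainEnd p cw = chainEnd p ccw
  /-- convexity at the vertex `p` -/
  junct_p : ∀ u w : Pt, (cw.map Prod.fst).head? = some u →
    (ccw.map Prod.fst).head? = some w → 0 < det w u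
  /-- convexity at the vertex `q` -/
  junct_q : ∀ u w : Pt, (cw.map Prod.fst).getLast? = some u →
    (ccw.map Prod.fst).getLast? = some w → 0 < det u w

/-- The `λ`-maximal vertex of the polygon. -/
def PolyData.q (P : PolyData) : Pt := chainEnd P.p P.ccw

/-- The canonical embedding `ℤ² → ℝ²`. -/
def toR (z : Pt) : ℝ × ℝ := ((z.1 : ℝ), (z.2 : ℝ))

/-- The set of lattice points of the polygon: all lattice points of the convex hull of the
boundary vertices. -/
def polySet (P : PolyData) : Set Pt :=
  {z | toR z ∈ convexHull ℝ
    (toR '' {w | w ∈ chainPts P.p P.cw ∨ w ∈ chainPts P.p P.ccw})}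

/-- `ExpandChain chain s` holds if the list of step vectors `s` traverses the edges of
`chain` in order, taking on each edge `e` exactly `β_e(k)` steps of lattice length `k`
(in some order). -/
def ExpandChain : List (Pt × Multiset ℕ) → List Pt → Prop
  | [], s => s = []
  | e :: es, s => ∃ (l : List ℕ) (r : List Pt), (l : Multiset ℕ) = e.2 ∧ ExpandChain es r ∧
      s = (l.map fun k => ((k : ℤ) * e.1.1, (k : ℤ) * e.1.2)) ++ r

/-- The initial paths determined by a boundary chain: the paths from `p` to `q` along the
chain whose steps on each edge `e` realize the data `β_e`. -/
def InitChain (p : Pt) (chain : List (Pt × Multiset ℕ)) (γ : List Pt) : Prop :=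
  ∃ s, ExpandChain chain s ∧ γ = pathFrom p s

/-- `mult₋` of a path in the polygon `P`. -/
def multMinusP (P : PolyData) : List Pt → ℕ :=
  multOf (polySet P) (InitChain P.p P.ccw) (fun x => x < 0)

/-- `mult₊` of a path in the polygon `P`. -/
def multPlusP (P : PolyData) : List Pt → ℕ :=
  multOf (polySet P) (InitChain P.p P.cw) (fun x => 0 < x)

/-! ### Auxiliary lemmas for Statement 0 -/

lemma lamLT_iff_sub (p q : Pt) : lamLT p q ↔ lamLT 0 (q - p) := by
  simp only [lamLT, Prod.fst_sub, Prod.snd_sub, Prod.fst_zero, Prod.snd_zero]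
  omega

lemma lamLT_add {u v : Pt} (hu : lamLT 0 u) (hv : lamLT 0 v) : lamLT 0 (u + v) := by
  simp only [lamLT, Prod.fst_add, Prod.snd_add, Prod.fst_zero, Prod.snd_zero] at *
  omega

lemma steps_nil : steps ([] : List Pt) = [] := rfl

lemma steps_single (p : Pt) : steps [p] = [] := rfl

lemma steps_cons_cons (p q : Pt) (l : List Pt) :
    steps (p :: q :: l) = (q - p) :: steps (q :: l) := rfl

lemma increasing_iff : ∀ γ : List Pt, Increasing γ ↔ ∀ v ∈ steps γ, lamLT 0 v
  | [] => by simp [Increasing, List.Chain', steps_nil]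
  | [p] => by simp [Increasing, List.Chain', steps_single]
  | p :: q :: l => by
    rw [Increasing, List.Chain', List.isChain_cons_cons, steps_cons_cons]
    simp only [List.mem_cons]
    rw [← List.Chain', ← Increasing, increasing_iff (q :: l), lamLT_iff_sub p q]
    constructor
    · rintro ⟨h1, h2⟩ v (rfl | hv)
      · exact h1
      · exact h2 v hv
    · intro h
      exact ⟨h _ (Or.inl rfl), fun v hv => h v (Or.inr hv)⟩

lemma steps_append : ∀ (A : List Pt) (u : Pt) (B : List Pt),
    steps (A ++ u :: B) = steps (A ++ [u]) ++ steps (u :: B)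
  | [], u, B => by simp [steps_single]
  | [a], u, B => by simp [steps_cons_cons, steps_single]
  | a :: b :: A, u, B => by
    have ih := steps_append (b :: A) u B
    simp only [List.cons_append, steps_cons_cons] at *
    rw [ih]

/-- The key decomposition: steps of `γ`, `cut γ k`, `push γ k` for a decomposed path. -/
lemma steps_decomp (l : List Pt) (x y z : Pt) (r : List Pt) :
    steps (l ++ x :: y :: z :: r)
      = steps (l ++ [x]) ++ (y - x) :: (z - y) :: steps (z :: r) := by
  rw [steps_append l x (y :: z :: r), steps_cons_cons, steps_cons_cons]

lemma steps_decomp' (l : List Pt) (x z : Pt) (r : List Pt) :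
    steps (l ++ x :: z :: r) = steps (l ++ [x]) ++ (z - x) :: steps (z :: r) := by
  rw [steps_append l x (z :: r), steps_cons_cons]

/-- Decomposition of a path around an interior index. -/
lemma path_decomp {γ : List Pt} {k : ℕ} (hk0 : 0 < k) (hk1 : k + 1 < γ.length) :
    ∃ (l : List Pt) (r : List Pt), l.length = k - 1 ∧
      γ = l ++ pt γ (k - 1) :: pt γ k :: pt γ (k + 1) :: r := by
  obtain ⟨k', rfl⟩ : ∃ k', k = k' + 1 := ⟨k - 1, by omega⟩
  have h0 : k' < γ.length := by omega
  have h1 : k' + 1 < γ.length := by omega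
  have h2 : k' + 2 < γ.length := by omega
  refine ⟨γ.take k', γ.drop (k' + 3), by simp; omega, ?_⟩
  have e0 : pt γ (k' + 1 - 1) = γ[k'] := by
    simp only [pt, Nat.add_sub_cancel]
    exact List.getD_eq_getElem γ _ h0
  have e1 : pt γ (k' + 1) = γ[k' + 1] := List.getD_eq_getElem γ _ h1
  have e2 : pt γ (k' + 1 + 1) = γ[k' + 2] := List.getD_eq_getElem γ _ h2
  rw [e0, e1, e2]
  conv_lhs => rw [← List.take_append_drop k' γ]
  rw [List.drop_eq_getElem_cons h0, List.drop_eq_getElem_cons h1,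
    List.drop_eq_getElem_cons h2]


lemma downSteps_coe (γ : List Pt) :
    downSteps γ = Multiset.filter (fun v : Pt => v.1 = 0 ∧ v.2 < 0) (steps γ : Multiset Pt) := rfl

lemma filter_mid_le (P : Pt → Prop) [DecidablePred P] (S1 S2 m m' : List Pt)
    (h : Multiset.filter P (m' : Multiset Pt) ≤ Multiset.filter P (m : Multiset Pt)) :
    Multiset.filter P ((S1 ++ m' ++ S2 : List Pt) : Multiset Pt)
      ≤ Multiset.filter P ((S1 ++ m ++ S2 : List Pt) : Multiset Pt) := by
  rw [← Multiset.coe_add, ← Multiset.coe_add, ← Multiset.coe_add, ← Multiset.coe_add,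
    Multiset.filter_add, Multiset.filter_add, Multiset.filter_add, Multiset.filter_add]
  exact add_le_add (add_le_add le_rfl h) le_rfl

/-- Main computation: at a turn (with nonzero determinant), cutting the corner can only
lose down steps, and completing the parallelogram permutes the steps. -/
lemma main_step {s : ℤ → Prop} (hs : ∀ t, s t → t ≠ 0) {γ : List Pt} {k : ℕ}
    (hinc : Increasing γ) (ht : TurnAt s γ k) :
    (Increasing (cut γ k) ∧ downSteps (cut γ k) ≤ downSteps γ) ∧
    (Increasing (push γ k) ∧ downSteps (push γ k) = downSteps γ) := by
  obtain ⟨hk0, hk1, hdet⟩ := ht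
  obtain ⟨l, r, hl, hγ⟩ := path_decomp hk0 hk1
  set x := pt γ (k - 1) with hx
  set y := pt γ k with hy
  set z := pt γ (k + 1) with hz
  have hdet0 : det (y - x) (z - y) ≠ 0 := hs _ hdet
  -- the modified paths
  have hcut : cut γ k = l ++ x :: z :: r := by
    rw [cut]
    conv_lhs => rw [hγ]
    rw [List.eraseIdx_append_of_length_le (by omega)]
    have h1 : k - l.length = 1 := by omega
    rw [h1]
    rfl
  have hpush : push γ k = l ++ x :: (x + z - y) :: z :: r := by
    rw [push, ← hx, ← hy, ← hz]
    conv_lhs => rw [hγ]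
    rw [List.set_append, if_neg (by omega)]
    have h1 : k - l.length = 1 := by omega
    rw [h1]
    rfl
  -- the step lists
  have hsγ : steps γ = steps (l ++ [x]) ++ (y - x) :: (z - y) :: steps (z :: r) := by
    conv_lhs => rw [hγ]
    exact steps_decomp l x y z r
  have hscut : steps (cut γ k) = steps (l ++ [x]) ++ (z - x) :: steps (z :: r) := by
    rw [hcut]; exact steps_decomp' l x z r
  have hspush : steps (push γ k)
      = steps (l ++ [x]) ++ (z - y) :: (y - x) :: steps (z :: r) := by
    rw [hpush, steps_decomp]
    congr 2
    · abel
    · congr 1; abel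
  -- the original path is increasing: all steps are λ-positive
  have hall : ∀ v ∈ steps γ, lamLT 0 v := (increasing_iff γ).1 hinc
  have hu : lamLT 0 (y - x) := hall _ (by rw [hsγ]; simp)
  have hv : lamLT 0 (z - y) := hall _ (by rw [hsγ]; simp)
  have huv : lamLT 0 (z - x) := by
    have := lamLT_add hu hv
    rwa [sub_add_sub_cancel'] at this
  have hmemS : ∀ v, v ∈ steps (l ++ [x]) ∨ v ∈ steps (z :: r) → lamLT 0 v := by
    intro v hvmem
    exact hall v (by rw [hsγ]; rcases hvmem with h | h <;> simp [h])
  constructor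
  · constructor
    · rw [increasing_iff, hscut]
      intro v hvmem
      simp only [List.mem_append, List.mem_cons] at hvmem
      rcases hvmem with h | rfl | h
      · exact hmemS v (Or.inl h)
      · exact huv
      · exact hmemS v (Or.inr h)
    · rw [downSteps_coe, downSteps_coe, hscut, hsγ,
        show steps (l ++ [x]) ++ (z - x) :: steps (z :: r)
            = steps (l ++ [x]) ++ [z - x] ++ steps (z :: r) by simp,
        show steps (l ++ [x]) ++ (y - x) :: (z - y) :: steps (z :: r)
            = steps (l ++ [x]) ++ [y - x, z - y] ++ steps (z :: r) by simp]
      refine filter_mid_le _ _ _ _ _ ?_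
      have hnz : ¬ ((z - x).1 = 0 ∧ (z - x).2 < 0) := by
        rintro ⟨h1, -⟩
        have e1 : (y - x).1 = 0 ∧ (z - y).1 = 0 := by
          rcases hu with h | ⟨h, -⟩ <;> rcases hv with h' | ⟨h', -⟩ <;>
            simp only [Prod.fst_sub, Prod.fst_zero, Prod.snd_sub] at * <;> omega
        apply hdet0
        rw [det, show (y - x).1 = 0 from e1.1, show (z - y).1 = 0 from e1.2]
        ring
      have : Multiset.filter (fun v : Pt => v.1 = 0 ∧ v.2 < 0) (([z - x] : List Pt) : Multiset Pt) = 0 := by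
        rw [Multiset.filter_eq_nil]
        intro a ha
        rw [show a = z - x by simpa using ha]
        exact hnz
      rw [this]
      exact Multiset.zero_le _
  · constructor
    · rw [increasing_iff, hspush]
      intro v hvmem
      simp only [List.mem_append, List.mem_cons] at hvmem
      rcases hvmem with h | rfl | rfl | h
      · exact hmemS v (Or.inl h)
      · exact hv
      · exact hu
      · exact hmemS v (Or.inr h)
    · rw [downSteps_coe, downSteps_coe, hspush, hsγ]
      congr 1
      rw [← Multiset.coe_add, ← Multiset.coe_add, ← Multiset.cons_coe, ← Multiset.cons_coe,
        ← Multiset.cons_coe, ← Multiset.cons_coe, Multiset.cons_swap]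

lemma downSteps_le_of_reaches {Δ : Set Pt} {Init : List Pt → Prop} {s : ℤ → Prop}
    (hs : ∀ t, s t → t ≠ 0) {γ δ : List Pt}
    (h : Reaches Δ Init s γ δ) : Increasing γ → downSteps δ ≤ downSteps γ := by
  induction h with
  | refl γ => exact fun _ => le_rfl
  | cutStep hI hft hR ih =>
      intro hinc
      obtain ⟨⟨hc1, hc2⟩, -⟩ := main_step hs hinc hft.1
      exact (ih hc1).trans hc2
  | pushStep hI hft hin hR ih =>
      intro hinc
      obtain ⟨-, hp1, hp2⟩ := main_step hs hinc hft.1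
      exact hp2 ▸ ih hp1

/-- If `γ ≺_L γ′` or `γ ≺_R γ′`, then every down step of `γ′` is a down
step of `γ`, counted with multiplicity. -/
theorem downSteps_subset_of_reaches (P : PolyData) (γ γ' : List Pt)
    (hinc : Increasing γ)
    (hfrom : γ.head? = some P.p) (hto : γ.getLast? = some P.q)
    (hin : Inside (polySet P) γ)
    (h : Reaches (polySet P) (InitChain P.p P.ccw) (fun x => x < 0) γ γ' ∨
         Reaches (polySet P) (InitChain P.p P.cw) (fun x => 0 < x) γ γ') :
    downSteps γ' ≤ downSteps γ := by
  rcases h with h | h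
  · exact downSteps_le_of_reaches (fun t ht => by omega) h hinc
  · exact downSteps_le_of_reaches (fun t ht => by omega) h hinc

end TropPaths
end
end

section
/- Let Δ be the rectangle of width c and height d with boundary data (μ₁, μ₂, ν₁, ν₂), where μ₂ = (1,…,1) consists of c parts equal to 1. If γ is a λ-increasing lattice path from (0,d) to (c,0) contained in Δ with mult(γ) ≠ 0, then every step of γ moves at most one unit to the right, i.e. γ(k+1)₁ − γ(k)₁ ≤ 1 for all k. -/
open Classical

noncomputable section

namespace TropPaths

/-! ### Auxiliary lemmas -/

/-- All steps move weakly to the right. -/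
def StepsNonneg (γ : List Pt) : Prop := ∀ k, k + 1 < γ.length → 0 ≤ (stepAt γ k).1

/-- Some step moves at least two units to the right. -/
def HasBigStep (γ : List Pt) : Prop := ∃ k, k + 1 < γ.length ∧ 2 ≤ (stepAt γ k).1

lemma pt_set_self {γ : List Pt} {k : ℕ} (h : k < γ.length) (a : Pt) :
    pt (γ.set k a) k = a := by
  simp [pt, List.getD_eq_getElem?_getD, List.getElem?_set_self h]

lemma pt_set_ne {γ : List Pt} {k j : ℕ} (h : k ≠ j) (a : Pt) :
    pt (γ.set k a) j = pt γ j := by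
  simp [pt, List.getD_eq_getElem?_getD, List.getElem?_set_ne h]

lemma pt_eraseIdx (γ : List Pt) (k j : ℕ) :
    pt (γ.eraseIdx k) j = if j < k then pt γ j else pt γ (j + 1) := by
  simp only [pt, List.getD_eq_getElem?_getD, List.getElem?_eraseIdx]
  split <;> rfl

lemma stepAt_push {γ : List Pt} {i : ℕ} (h : i + 2 < γ.length) (j : ℕ) :
    stepAt (push γ (i + 1)) j =
      if j = i then stepAt γ (i + 1) else if j = i + 1 then stepAt γ i else stepAt γ j := by
  have h1 : i + 1 < γ.length := by omega
  have e1 : i + 1 - 1 = i := by omega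
  unfold push stepAt
  rw [e1]
  split_ifs with h2 h3
  · rw [h2, pt_set_self h1, pt_set_ne (by omega : i + 1 ≠ i)]
    generalize pt γ i = A
    generalize pt γ (i + 1 + 1) = C
    generalize pt γ (i + 1) = B
    abel
  · rw [h3, pt_set_ne (by omega : i + 1 ≠ i + 1 + 1), pt_set_self h1]
    generalize pt γ i = A
    generalize pt γ (i + 1 + 1) = C
    generalize pt γ (i + 1) = B
    abel
  · rw [pt_set_ne (by omega : i + 1 ≠ j + 1), pt_set_ne (by omega : i + 1 ≠ j)]

lemma stepAt_cut (γ : List Pt) (i j : ℕ) :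
    stepAt (cut γ (i + 1)) j =
      if j < i then stepAt γ j
      else if j = i then stepAt γ i + stepAt γ (i + 1)
      else stepAt γ (j + 1) := by
  unfold cut stepAt
  rw [pt_eraseIdx, pt_eraseIdx]
  by_cases h1 : j < i
  · rw [if_pos (by omega : j + 1 < i + 1), if_pos (by omega : j < i + 1), if_pos h1]
  · by_cases h2 : j = i
    · rw [h2, if_neg (by omega : ¬ i + 1 < i + 1), if_pos (by omega : i < i + 1),
        if_neg (lt_irrefl i), if_pos rfl]
      generalize pt γ i = A
      generalize pt γ (i + 1 + 1) = C
      generalize pt γ (i + 1) = B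
      abel
    · rw [if_neg (by omega : ¬ j + 1 < i + 1), if_neg (by omega : ¬ j < i + 1),
        if_neg h1, if_neg h2]

lemma length_cut {γ : List Pt} {k : ℕ} (h : k < γ.length) :
    (cut γ k).length = γ.length - 1 := by
  simp [cut, List.length_eraseIdx, h]

lemma length_push (γ : List Pt) (k : ℕ) : (push γ k).length = γ.length := by
  simp [push]

lemma stepsNonneg_cut {γ : List Pt} {k : ℕ} (hn : StepsNonneg γ) (hk0 : 0 < k)
    (hk1 : k + 1 < γ.length) : StepsNonneg (cut γ k) := by
  obtain ⟨i, rfl⟩ : ∃ i, k = i + 1 := ⟨k - 1, by omega⟩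
  intro j hj
  rw [length_cut (by omega)] at hj
  rw [stepAt_cut]
  split_ifs with h1 h2
  · exact hn j (by omega)
  · have a := hn i (by omega)
    have b := hn (i + 1) (by omega)
    rw [Prod.fst_add]; omega
  · exact hn (j + 1) (by omega)

lemma hasBigStep_cut {γ : List Pt} {k : ℕ} (hn : StepsNonneg γ) (hk0 : 0 < k)
    (hk1 : k + 1 < γ.length) (hb : HasBigStep γ) : HasBigStep (cut γ k) := by
  obtain ⟨i, rfl⟩ : ∃ i, k = i + 1 := ⟨k - 1, by omega⟩
  obtain ⟨j, hj, hjx⟩ := hb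
  have hlen : (cut γ (i + 1)).length = γ.length - 1 := length_cut (by omega)
  rcases lt_or_ge j i with h | h
  · exact ⟨j, by rw [hlen]; omega, by rw [stepAt_cut, if_pos h]; exact hjx⟩
  · rcases lt_or_ge j (i + 2) with h' | h'
    · refine ⟨i, by rw [hlen]; omega, ?_⟩
      rw [stepAt_cut, if_neg (by omega), if_pos rfl, Prod.fst_add]
      have a := hn i (by omega)
      have b := hn (i + 1) (by omega)
      rcases (show j = i ∨ j = i + 1 by omega) with rfl | rfl <;> omega
    · obtain ⟨m, rfl⟩ : ∃ m, j = m + 1 := ⟨j - 1, by omega⟩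
      refine ⟨m, by rw [hlen]; omega, ?_⟩
      rw [stepAt_cut, if_neg (by omega), if_neg (by omega)]
      exact hjx

lemma stepsNonneg_push {γ : List Pt} {k : ℕ} (hn : StepsNonneg γ) (hk0 : 0 < k)
    (hk1 : k + 1 < γ.length) : StepsNonneg (push γ k) := by
  obtain ⟨i, rfl⟩ : ∃ i, k = i + 1 := ⟨k - 1, by omega⟩
  intro j hj
  rw [length_push] at hj
  rw [stepAt_push (by omega)]
  split_ifs with h1 h2
  · exact hn (i + 1) (by omega)
  · exact hn i (by omega)
  · exact hn j hj

lemma hasBigStep_push {γ : List Pt} {k : ℕ} (hk0 : 0 < k)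
    (hk1 : k + 1 < γ.length) (hb : HasBigStep γ) : HasBigStep (push γ k) := by
  obtain ⟨i, rfl⟩ : ∃ i, k = i + 1 := ⟨k - 1, by omega⟩
  obtain ⟨j, hj, hjx⟩ := hb
  by_cases h1 : j = i
  · refine ⟨i + 1, by rw [length_push]; omega, ?_⟩
    rw [stepAt_push (by omega), if_neg (by omega : ¬ i + 1 = i), if_pos rfl]
    rw [h1] at hjx; exact hjx
  · by_cases h2 : j = i + 1
    · refine ⟨i, by rw [length_push]; omega, ?_⟩
      rw [stepAt_push (by omega), if_pos rfl]
      rw [h2] at hjx; exact hjx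
    · refine ⟨j, by rw [length_push]; omega, ?_⟩
      rw [stepAt_push (by omega), if_neg h1, if_neg h2]
      exact hjx

/-- The key induction: a path all of whose steps move weakly right, one of which moves at
least two units right, has multiplicity `0`, provided no initial path has a big step. -/
lemma multRel_eq_zero_of_hasBigStep {Δ : Set Pt} {Init : List Pt → Prop} {s : ℤ → Prop}
    (hInit : ∀ δ, Init δ → ¬ HasBigStep δ) :
    ∀ {γ : List Pt} {m : ℕ}, MultRel Δ Init s γ m → StepsNonneg γ → HasBigStep γ → m = 0 := by
  intro γ m h
  induction h with
  | init hi => exact fun _ hb => absurd hb (hInit _ hi)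
  | noTurn _ _ => exact fun _ _ => rfl
  | @stepIn γ k m' m'' _ hft _ _ _ ih' ih'' =>
    intro hn hb
    obtain ⟨⟨hk0, hk1, _⟩, _⟩ := hft
    rw [ih' (stepsNonneg_cut hn hk0 hk1) (hasBigStep_cut hn hk0 hk1 hb),
      ih'' (stepsNonneg_push hn hk0 hk1) (hasBigStep_push hk0 hk1 hb)]
    simp
  | @stepOut γ k m' _ hft _ _ ih' =>
    intro hn hb
    obtain ⟨⟨hk0, hk1, _⟩, _⟩ := hft
    rw [ih' (stepsNonneg_cut hn hk0 hk1) (hasBigStep_cut hn hk0 hk1 hb), Nat.mul_zero]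

lemma length_pathFrom (p : Pt) (vs : List Pt) : (pathFrom p vs).length = vs.length + 1 := by
  induction vs generalizing p with
  | nil => rfl
  | cons v vs ih => simp [pathFrom, ih]

lemma pt_pathFrom_zero (p : Pt) (vs : List Pt) : pt (pathFrom p vs) 0 = p := by
  cases vs <;> rfl

lemma stepAt_pathFrom (p : Pt) (vs : List Pt) (k : ℕ) (hk : k < vs.length) :
    stepAt (pathFrom p vs) k = vs.getD k (0, 0) := by
  induction vs generalizing p k with
  | nil => simp at hk
  | cons v vs ih =>
    cases k with
    | zero =>
      show pt (p :: pathFrom (p + v) vs) 1 - pt (p :: pathFrom (p + v) vs) 0 = v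
      have h0 : pt (p :: pathFrom (p + v) vs) 1 = p + v := by
        simpa [pt, List.getD_cons_succ] using pt_pathFrom_zero (p + v) vs
      have h1 : pt (p :: pathFrom (p + v) vs) 0 = p := by simp [pt]
      rw [h0, h1, add_sub_cancel_left]
    | succ k =>
      have heq : stepAt (pathFrom p (v :: vs)) (k + 1) = stepAt (pathFrom (p + v) vs) k := by
        simp only [pathFrom, stepAt, pt, List.getD_cons_succ]
      rw [heq, List.getD_cons_succ]
      exact ih (p + v) k (by simpa using hk)

lemma initPlus_not_hasBigStep {c d : ℕ} {ν₂ : Multiset ℕ} {γ : List Pt}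
    (h : InitPlusRect d (Multiset.replicate c 1) ν₂ γ) : ¬ HasBigStep γ := by
  obtain ⟨s, t, hs, ht, rfl⟩ := h
  rintro ⟨k, hk, hx⟩
  rw [length_pathFrom] at hk
  have hk' : k < (hSteps s ++ dSteps t).length := by omega
  rw [stepAt_pathFrom _ _ _ hk', List.getD_eq_getElem _ _ hk'] at hx
  have hle : ∀ v ∈ hSteps s ++ dSteps t, v.1 ≤ 1 := by
    intro v hv
    rcases List.mem_append.mp hv with hm | hm
    · simp only [hSteps, List.mem_map] at hm
      obtain ⟨a, ha, rfl⟩ := hm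
      obtain ⟨n, hn, rfl⟩ : ∃ n ∈ s, a = (n : ℤ) := by simpa using ha
      have ha1 : n = 1 := Multiset.eq_of_mem_replicate (hs ▸ Multiset.mem_coe.mpr hn)
      simp [ha1]
    · simp only [dSteps, List.mem_map] at hm
      obtain ⟨a, ha, rfl⟩ := hm
      simp
  have := hle _ (List.getElem_mem hk')
  omega

lemma stepsNonneg_of_increasing {γ : List Pt} (h : Increasing γ) : StepsNonneg γ := by
  intro k hk
  have hR := List.isChain_iff_getElem.mp h k (by omega)
  have h1 : pt γ k = γ.get ⟨k, by omega⟩ := by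
    simp [pt, List.getD_eq_getElem, List.get_eq_getElem, Nat.lt_of_succ_lt hk]
  have h2 : pt γ (k + 1) = γ.get ⟨k + 1, by omega⟩ := by
    simp [pt, List.getD_eq_getElem, List.get_eq_getElem, hk]
  unfold stepAt
  rw [h1, h2, Prod.fst_sub]
  simp only [List.get_eq_getElem]
  rcases hR with hlt | ⟨heq, _⟩ <;> omega


/-- In the rectangle of width `c` and height `d` with `μ₂ = (1,…,1)`, if
`mult(γ) ≠ 0` then every step of `γ` moves at most one unit to the right. -/
theorem step_right_le_one_of_mult_ne_zero (c d : ℕ) (hc : 0 < c) (hd : 0 < d)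
    (μ₁ ν₁ ν₂ : Multiset ℕ)
    (hμ₁ : IsPartition μ₁ c) (hν₁ : IsPartition ν₁ d) (hν₂ : IsPartition ν₂ d)
    (γ : List Pt) (hγ : IsPathRect c d γ)
    (hmult : multRect c d μ₁ (Multiset.replicate c 1) ν₁ ν₂ γ ≠ 0) :
    ∀ k, k + 1 < γ.length → (stepAt γ k).1 ≤ 1 := by
  intro k hk
  by_contra hbig
  have hx : 2 ≤ (stepAt γ k).1 := by omega
  have hb : HasBigStep γ := ⟨k, hk, hx⟩
  have hn : StepsNonneg γ := stepsNonneg_of_increasing hγ.1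
  have hplus : multPlusRect c d (Multiset.replicate c 1) ν₂ γ ≠ 0 := by
    intro h0
    exact hmult (by simp [multRect, h0])
  unfold multPlusRect multOf at hplus
  by_cases hex : ∃ m, MultRel (rect c d) (InitPlusRect d (Multiset.replicate c 1) ν₂)
      (fun x => 0 < x) γ m
  · rw [dif_pos hex] at hplus
    exact hplus (multRel_eq_zero_of_hasBigStep
      (fun δ hδ => initPlus_not_hasBigStep hδ) hex.choose_spec hn hb)
  · rw [dif_neg hex] at hplus
    exact hplus rfl

end TropPaths
end
end
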